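/- Let p be a real number with p ≠ 1, let 0 < r₀ < r₁, and let φ : [r₀, r₁] → ℝ be continuously differentiable. Then ((p−1)²/4) ∫_{r₀}^{r₁} φ(r)² r^{p−2} dr ≤ ∫_{r₀}^{r₁} (φ′(r))² r^{p} dr + ((p−1)/2) ( r₁^{p−1} φ(r₁)² − r₀^{p−1} φ(r₀)² ). -/

import Mathlib

open MeasureTheory

/-- **Hardy inequality with exact constant.**
If `p ≠ 1`, `0 < r₀ < r₁` and `φ` is continuously differentiable on `[r₀, r₁]`
(with derivative `φ'`), then
`((p−1)²/4) ∫_{r₀}^{r₁} φ² r^{p−2} dr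
  ≤ ∫_{r₀}^{r₁} (φ')² r^p dr + ((p−1)/2) (r₁^{p−1} φ(r₁)² − r₀^{p−1} φ(r₀)²)`. -/
theorem hardy_inequality
    (p r₀ r₁ : ℝ) (hp : p ≠ 1) (hr₀ : 0 < r₀) (hr : r₀ < r₁)
    (φ φ' : ℝ → ℝ)
    (hderiv : ∀ r ∈ Set.Icc r₀ r₁, HasDerivAt φ (φ' r) r)
    (hcont : ContinuousOn φ' (Set.Icc r₀ r₁)) :
    ((p - 1) ^ 2 / 4) * ∫ r in r₀..r₁, (φ r) ^ 2 * r ^ (p - 2) ≤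
      (∫ r in r₀..r₁, (φ' r) ^ 2 * r ^ p)
        + ((p - 1) / 2) * (r₁ ^ (p - 1) * (φ r₁) ^ 2 - r₀ ^ (p - 1) * (φ r₀) ^ 2) := by
  have hle : r₀ ≤ r₁ := hr.le
  have huIcc : Set.uIcc r₀ r₁ = Set.Icc r₀ r₁ := Set.uIcc_of_le hle
  have hpos : ∀ r ∈ Set.Icc r₀ r₁, (0:ℝ) < r := fun r hr' => lt_of_lt_of_le hr₀ hr'.1
  have hφc : ContinuousOn φ (Set.Icc r₀ r₁) :=
    fun x hx => ((hderiv x hx).continuousAt).continuousWithinAt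
  have hrpow : ∀ q : ℝ, ContinuousOn (fun r : ℝ => r ^ q) (Set.Icc r₀ r₁) :=
    fun q x hx => (Real.continuousAt_rpow_const x q (Or.inl (hpos x hx).ne')).continuousWithinAt
  set g' : ℝ → ℝ := fun r => (p-1) * r ^ (p-2) * (φ r)^2 + r ^ (p-1) * (2 * φ r * φ' r)
    with hg'def
  -- derivative of r^(p-1) * φ^2
  have hgderiv : ∀ r ∈ Set.uIcc r₀ r₁,
      HasDerivAt (fun r => r ^ (p-1) * (φ r)^2) (g' r) r := by
    intro r hrm
    rw [huIcc] at hrm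
    have h1 : HasDerivAt (fun r : ℝ => r ^ (p-1)) ((p-1) * r ^ (p-1-1)) r :=
      Real.hasDerivAt_rpow_const (Or.inl (hpos r hrm).ne')
    have h2 : HasDerivAt (fun r => (φ r)^2) ((2:ℕ) * φ r ^ 1 * φ' r) r :=
      (hderiv r hrm).pow 2
    have h3 := h1.fun_mul h2
    have hexp : p - 1 - 1 = p - 2 := by ring
    refine h3.congr_deriv ?_
    rw [hexp]
    push_cast
    ring
  -- integrability of all the pieces
  have int1 : IntervalIntegrable (fun r => (φ' r)^2 * r ^ p) volume r₀ r₁ := by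
    apply ContinuousOn.intervalIntegrable
    rw [huIcc]; exact (hcont.pow 2).mul (hrpow p)
  have int2 : IntervalIntegrable g' volume r₀ r₁ := by
    apply ContinuousOn.intervalIntegrable
    rw [huIcc]
    exact ((continuousOn_const.mul (hrpow (p-2))).mul (hφc.pow 2)).add
      ((hrpow (p-1)).mul ((continuousOn_const.mul hφc).mul hcont))
  have int2' : IntervalIntegrable (fun r => ((p-1)/2) * g' r) volume r₀ r₁ := int2.const_mul _
  have int3 : IntervalIntegrable (fun r => (φ r)^2 * r ^ (p-2)) volume r₀ r₁ := by
    apply ContinuousOn.intervalIntegrable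
    rw [huIcc]; exact (hφc.pow 2).mul (hrpow (p-2))
  have int3' : IntervalIntegrable (fun r => ((p-1)^2/4) * ((φ r)^2 * r ^ (p-2))) volume r₀ r₁ :=
    int3.const_mul _
  -- FTC
  have hFTC : ∫ r in r₀..r₁, g' r =
      r₁ ^ (p-1) * (φ r₁)^2 - r₀ ^ (p-1) * (φ r₀)^2 :=
    intervalIntegral.integral_eq_sub_of_hasDerivAt hgderiv int2
  -- pointwise identity
  have hid : ∀ r ∈ Set.uIcc r₀ r₁,
      (φ' r * r ^ (p/2) + ((p-1)/2) * φ r * r ^ ((p-2)/2))^2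
        = (φ' r)^2 * r ^ p + ((p-1)/2) * g' r
          - ((p-1)^2/4) * ((φ r)^2 * r ^ (p-2)) := by
    intro r hrm
    rw [huIcc] at hrm
    have hr' : (0:ℝ) < r := hpos r hrm
    have ha : r ^ (p/2) * r ^ (p/2) = r ^ p := by
      rw [← Real.rpow_add hr']; norm_num
    have hab : r ^ (p/2) * r ^ ((p-2)/2) = r ^ (p-1) := by
      rw [← Real.rpow_add hr']; ring_nf
    have hb : r ^ ((p-2)/2) * r ^ ((p-2)/2) = r ^ (p-2) := by
      rw [← Real.rpow_add hr']; ring_nf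
    simp only [hg'def]
    linear_combination (φ' r)^2 * ha + (p-1) * φ r * φ' r * hab + ((p-1)^2/4) * (φ r)^2 * hb
  -- nonnegativity of the square integral
  have hnn : 0 ≤ ∫ r in r₀..r₁,
      (φ' r * r ^ (p/2) + ((p-1)/2) * φ r * r ^ ((p-2)/2))^2 :=
    intervalIntegral.integral_nonneg hle (fun r _ => sq_nonneg _)
  have hsplit : ∫ r in r₀..r₁,
      (φ' r * r ^ (p/2) + ((p-1)/2) * φ r * r ^ ((p-2)/2))^2
      = (∫ r in r₀..r₁, (φ' r)^2 * r ^ p)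
        + ((p-1)/2) * (∫ r in r₀..r₁, g' r)
        - ((p-1)^2/4) * (∫ r in r₀..r₁, (φ r)^2 * r ^ (p-2)) := by
    rw [intervalIntegral.integral_congr hid,
      intervalIntegral.integral_sub (int1.add int2') int3',
      intervalIntegral.integral_add int1 int2',
      intervalIntegral.integral_const_mul, intervalIntegral.integral_const_mul]
  rw [hsplit, hFTC] at hnn
  linarith
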